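/- Let μ, μ_w, μ_s be real numbers with ‖μ_s − μ‖ < ‖μ_w − μ‖ and (μ − μ_s)·(μ_s − μ_w) > 0. Define B(ω) = ω·μ_s + (1−ω)·μ_w and E(ω) = (B(ω) − μ)². Then the derivative E′(ω) is negative at both ω = 0 and ω = 1. -/

import Mathlib

theorem w2s_deriv_neg_at_zero_and_one (μ μw μs : ℝ)
    (h1 : ‖μs - μ‖ < ‖μw - μ‖)
    (h2 : (μ - μs) * (μs - μw) > 0) :
    deriv (fun ω : ℝ => (ω * μs + (1 - ω) * μw - μ) ^ 2) 0 < 0 ∧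
    deriv (fun ω : ℝ => (ω * μs + (1 - ω) * μw - μ) ^ 2) 1 < 0 := by
  have hd : ∀ x : ℝ, HasDerivAt (fun ω : ℝ => (ω * μs + (1 - ω) * μw - μ) ^ 2)
      (2 * (x * μs + (1 - x) * μw - μ) * (μs - μw)) x := by
    intro x
    have h : HasDerivAt (fun ω : ℝ => ω * μs + (1 - ω) * μw - μ) (μs - μw) x := by
      have := (((hasDerivAt_id x).mul_const μs).add
        (((hasDerivAt_const x (1:ℝ)).sub (hasDerivAt_id x)).mul_const μw)).sub_const μ
      exact this.congr_deriv (by ring)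
    exact (h.pow 2).congr_deriv (by push_cast; ring)
  rw [(hd 0).deriv, (hd 1).deriv]
  have habs : |μs - μ| < |μw - μ| := by simpa [Real.norm_eq_abs] using h1
  have h1' : (μs - μ)^2 < (μw - μ)^2 := by
    have := mul_self_lt_mul_self (abs_nonneg (μs - μ)) habs
    simpa [sq_abs, pow_two] using this
  constructor <;> nlinarith [sq_nonneg (μs - μw), sq_nonneg (μw - μ), sq_nonneg (μs - μ)]
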